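/- Let H, M_l, M_g be N×N complex matrices with H Hermitian and M_l, M_g positive semidefinite Hermitian, set X := −i•H + M_l + M_gᵀ and L_eff := fromBlocks(−i•H − M_l + M_gᵀ, 2•M_gᵀ, 2•M_l, −i•H + M_l − M_gᵀ), and suppose Z satisfies the Sylvester equation Z⬝X + Xᴴ⬝Z + 2•(M_gᵀ − M_l) = 0. If there is Δ > 0 such that every eigenvalue μ ∈ spectrum ℂ L_eff satisfies |Re μ| ≥ Δ, then every eigenvalue μ ∈ spectrum ℂ X satisfies Re μ ≥ Δ. -/
import Mathlib


open Matrix ComplexOrder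

theorem stmt_2 {N : ℕ} (H Ml Mg Z : Matrix (Fin N) (Fin N) ℂ)
    (hH : H.IsHermitian) (hMl : Ml.PosSemidef) (hMg : Mg.PosSemidef)
    (X : Matrix (Fin N) (Fin N) ℂ)
    (hX : X = (-Complex.I) • H + Ml + Mgᵀ)
    (Leff : Matrix (Fin N ⊕ Fin N) (Fin N ⊕ Fin N) ℂ)
    (hLeff : Leff = fromBlocks ((-Complex.I) • H - Ml + Mgᵀ) ((2 : ℂ) • Mgᵀ)
      ((2 : ℂ) • Ml) ((-Complex.I) • H + Ml - Mgᵀ))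
    (hZ : Z * X + Xᴴ * Z + (2 : ℂ) • (Mgᵀ - Ml) = 0)
    (Δ : ℝ) (hΔ : 0 < Δ)
    (hgap : ∀ μ ∈ spectrum ℂ Leff, Δ ≤ |μ.re|) :
    ∀ μ ∈ spectrum ℂ X, Δ ≤ μ.re := by
  intro μ hμ
  have hMgT : (Mgᵀ).PosSemidef := hMg.transpose
  have hXH : Xᴴ = Complex.I • H + Ml + Mgᵀ := by
    rw [hX]
    simp [conjTranspose_add, conjTranspose_smul, hH.eq, hMl.1.eq, hMgT.1.eq, Complex.ext_iff]
  -- extract eigenvector of X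
  rw [spectrum.mem_iff, Matrix.isUnit_iff_isUnit_det, isUnit_iff_ne_zero, not_not] at hμ
  obtain ⟨v, hv0, hv⟩ := (Matrix.exists_mulVec_eq_zero_iff).2 hμ
  have hXv : X *ᵥ v = μ • v := by
    have h1 := hv
    rw [Matrix.sub_mulVec] at h1
    have h2 : (algebraMap ℂ (Matrix (Fin N) (Fin N) ℂ)) μ *ᵥ v = μ • v := by
      rw [Algebra.algebraMap_eq_smul_one, Matrix.smul_mulVec, Matrix.one_mulVec]
    rw [h2, sub_eq_zero] at h1
    exact h1.symm
  -- eigenvector of Xᴴ with eigenvalue star μ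
  have hdetH : (star μ • (1 : Matrix (Fin N) (Fin N) ℂ) - Xᴴ).det = 0 := by
    have : ((algebraMap ℂ (Matrix (Fin N) (Fin N) ℂ)) μ - X)ᴴ.det = 0 := by
      rw [Matrix.det_conjTranspose, hμ, star_zero]
    rwa [conjTranspose_sub, Algebra.algebraMap_eq_smul_one, conjTranspose_smul,
      conjTranspose_one] at this
  obtain ⟨u, hu0, hu⟩ := (Matrix.exists_mulVec_eq_zero_iff).2 hdetH
  have hXHu : Xᴴ *ᵥ u = star μ • u := by
    rw [Matrix.sub_mulVec, Matrix.smul_mulVec, Matrix.one_mulVec, sub_eq_zero] at hu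
    exact hu.symm
  -- Re μ ≥ 0 from numerical range
  have hreμ : 0 ≤ μ.re := by
    have hs : (0 : ℂ) < star v ⬝ᵥ v := dotProduct_star_self_pos_iff.2 hv0
    have hsre : 0 < (star v ⬝ᵥ v).re := (Complex.lt_def.1 hs).1
    have hsim : (star v ⬝ᵥ v).im = 0 := ((Complex.lt_def.1 hs).2).symm
    have hHr : (star v ⬝ᵥ H *ᵥ v).im = 0 := by
      have : star (star v ⬝ᵥ H *ᵥ v) = star v ⬝ᵥ H *ᵥ v := by
        nth_rewrite 2 [← hH.eq]
        rw [star_dotProduct, star_star, star_mulVec, Matrix.dotProduct_mulVec]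
      exact Complex.conj_eq_iff_im.1 this
    have hMlr := hMl.re_dotProduct_nonneg v
    have hMgr := hMgT.re_dotProduct_nonneg v
    simp only [RCLike.re_to_complex] at hMlr hMgr
    have key : star v ⬝ᵥ X *ᵥ v = μ * (star v ⬝ᵥ v) := by
      rw [hXv, dotProduct_smul, smul_eq_mul]
    rw [hX, Matrix.add_mulVec, Matrix.add_mulVec, Matrix.smul_mulVec,
      dotProduct_add, dotProduct_add, dotProduct_smul] at key
    have keyre := congrArg Complex.re key
    simp only [Complex.add_re, Complex.mul_re, Complex.neg_re, Complex.I_re, Complex.neg_im,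
      Complex.I_im, smul_eq_mul, hsim, hHr] at keyre
    nlinarith
  -- -(star μ) is an eigenvalue of Leff, with eigenvector (u, -u)
  have hspec : -(star μ) ∈ spectrum ℂ Leff := by
    rw [spectrum.mem_iff, Matrix.isUnit_iff_isUnit_det, isUnit_iff_ne_zero, not_not,
      ← Matrix.exists_mulVec_eq_zero_iff]
    refine ⟨Sum.elim u (-u), ?_, ?_⟩
    · intro h
      apply hu0
      funext i
      exact congrFun h (Sum.inl i)
    · have hA : ((-Complex.I) • H - Ml + Mgᵀ) *ᵥ u + ((2 : ℂ) • Mgᵀ) *ᵥ (-u)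
          = -(star μ) • u := by
        have heq : (-Complex.I) • H - Ml + Mgᵀ = -(Xᴴ) + (2 : ℂ) • Mgᵀ := by
          rw [hXH]; module
        rw [heq, Matrix.add_mulVec, Matrix.neg_mulVec, hXHu, Matrix.mulVec_neg]
        module
      have hD : ((2 : ℂ) • Ml) *ᵥ u + ((-Complex.I) • H + Ml - Mgᵀ) *ᵥ (-u)
          = -(star μ) • (-u) := by
        have heq : (-Complex.I) • H + Ml - Mgᵀ = -(Xᴴ) + (2 : ℂ) • Ml := by
          rw [hXH]; module
        rw [heq, Matrix.mulVec_neg, Matrix.add_mulVec, Matrix.neg_mulVec, hXHu]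
        module
      rw [Matrix.sub_mulVec, Algebra.algebraMap_eq_smul_one, Matrix.smul_mulVec,
        Matrix.one_mulVec, hLeff, Matrix.fromBlocks_mulVec]
      simp only [Sum.elim_comp_inl, Sum.elim_comp_inr]
      rw [hA, hD, sub_eq_zero]
      funext i
      cases i <;> simp
  have h1 := hgap _ hspec
  have h2 : (-(star μ)).re = -μ.re := by simp [Complex.star_def]
  rw [h2, abs_neg, abs_of_nonneg hreμ] at h1
  exact h1
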